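/- Let (c_n) be a sequence in ℂ with |c_n| → ∞ and (1/n)·log|c_n| → 0, and set p_n(z) = z^{n-1}(z - c_n) for n ≥ 2. Then: (a) (1/n)·log(sup_{|z|=1}|p_n(z)|) → 0 as n → ∞; and (b) c_n belongs to the filled Julia set K_{p_n} for every n (since p_n(c_n) = 0 and 0 is a fixed point of p_n), so the filled Julia sets K_{p_n} are not uniformly bounded. -/

import Mathlib

open Filter

/-- Filled Julia set: points with bounded forward orbit. -/
def filledJulia (f : ℂ → ℂ) : Set ℂ :=
  {z | Bornology.IsBounded (Set.range fun k : ℕ => f^[k] z)}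

lemma sup_eq (n : ℕ) (c : ℂ) :
    (⨆ z : Metric.sphere (0 : ℂ) 1, ‖(z : ℂ) ^ (n - 1) * ((z : ℂ) - c)‖) = 1 + ‖c‖ := by
  have hbound : ∀ z : Metric.sphere (0 : ℂ) 1,
      ‖(z : ℂ) ^ (n - 1) * ((z : ℂ) - c)‖ ≤ 1 + ‖c‖ := by
    intro z
    have hz : ‖(z : ℂ)‖ = 1 := by
      have := z.2
      simpa [mem_sphere_iff_norm] using this
    rw [norm_mul, norm_pow, hz, one_pow, one_mul]
    calc ‖(z : ℂ) - c‖ ≤ ‖(z : ℂ)‖ + ‖c‖ := norm_sub_le _ _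
      _ = 1 + ‖c‖ := by rw [hz]
  have hbdd : BddAbove (Set.range fun z : Metric.sphere (0 : ℂ) 1 =>
      ‖(z : ℂ) ^ (n - 1) * ((z : ℂ) - c)‖) := by
    refine ⟨1 + ‖c‖, ?_⟩
    rintro x ⟨z, rfl⟩
    exact hbound z
  apply le_antisymm
  · exact Real.iSup_le hbound (by positivity)
  · by_cases hc : c = 0
    · subst hc
      have h1 : ((1 : ℂ)) ∈ Metric.sphere (0 : ℂ) 1 := by
        simp [mem_sphere_iff_norm]
      have := le_ciSup hbdd (⟨1, h1⟩ : Metric.sphere (0 : ℂ) 1)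
      simpa using this
    · set w : ℂ := -(‖c‖ : ℂ)⁻¹ * c with hw
      have hcn : (‖c‖ : ℝ) ≠ 0 := by simpa using hc
      have hwmem : w ∈ Metric.sphere (0 : ℂ) 1 := by
        simp only [mem_sphere_iff_norm, sub_zero, hw, norm_mul, norm_neg, norm_inv]
        rw [Complex.norm_real, Real.norm_eq_abs, abs_of_nonneg (norm_nonneg c)]
        field_simp
      have hval : ‖w ^ (n - 1) * (w - c)‖ = 1 + ‖c‖ := by
        have hwn : ‖w‖ = 1 := by simpa [mem_sphere_iff_norm] using hwmem
        rw [norm_mul, norm_pow, hwn, one_pow, one_mul]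
        have : w - c = -((‖c‖ : ℂ)⁻¹ + 1) * c := by
          rw [hw]; ring
        rw [this, norm_mul, norm_neg]
        have hpos : (0 : ℝ) < ‖c‖ := by positivity
        have : ‖(‖c‖ : ℂ)⁻¹ + 1‖ = (‖c‖)⁻¹ + 1 := by
          rw [show ((‖c‖ : ℂ)⁻¹ + 1) = ((((‖c‖)⁻¹ + 1 : ℝ)) : ℂ) by push_cast; ring]
          rw [Complex.norm_real, Real.norm_eq_abs, abs_of_pos (by positivity)]
        rw [this]
        field_simp
      have := le_ciSup hbdd (⟨w, hwmem⟩ : Metric.sphere (0 : ℂ) 1)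
      rw [hval] at this
      exact this

lemma in_julia (n : ℕ) (hn : 2 ≤ n) (c : ℂ) :
    c ∈ filledJulia (fun z => z ^ (n - 1) * (z - c)) := by
  set f : ℂ → ℂ := fun z => z ^ (n - 1) * (z - c) with hf
  have hfc : f c = 0 := by simp [hf]
  have hf0 : f 0 = 0 := by
    have h1 : 1 ≤ n - 1 := by omega
    simp [hf, zero_pow (by omega : n - 1 ≠ 0)]
  have hiter : ∀ k : ℕ, f^[k] c = c ∨ f^[k] c = 0 := by
    intro k
    induction k with
    | zero => left; simp
    | succ k ih =>
      right
      rw [Function.iterate_succ_apply']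
      rcases ih with h | h <;> rw [h] <;> simp [hfc, hf0]
  have hsub : (Set.range fun k : ℕ => f^[k] c) ⊆ {c, 0} := by
    rintro x ⟨k, rfl⟩
    rcases hiter k with h | h <;> simp [h]
  exact (Set.Finite.isBounded (by simp : ({c, 0} : Set ℂ).Finite)).subset hsub

theorem statement10 (c : ℕ → ℂ)
    (hinf : Tendsto (fun n => ‖c n‖) atTop atTop)
    (hlog : Tendsto (fun n : ℕ => (1 / n : ℝ) * Real.log ‖c n‖) atTop (nhds 0)) :
    Tendsto (fun n : ℕ =>
        (1 / n : ℝ) * Real.log (⨆ z : Metric.sphere (0 : ℂ) 1,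
          ‖(z : ℂ) ^ (n - 1) * ((z : ℂ) - c n)‖)) atTop (nhds 0) ∧
    (∀ n : ℕ, 2 ≤ n → c n ∈ filledJulia (fun z => z ^ (n - 1) * (z - c n))) ∧
    ¬ ∃ R : ℝ, ∀ n : ℕ, 2 ≤ n →
        filledJulia (fun z => z ^ (n - 1) * (z - c n)) ⊆
          Metric.closedBall (0 : ℂ) R := by
  refine ⟨?_, fun n hn => in_julia n hn (c n), ?_⟩
  · simp only [sup_eq]
    -- squeeze between (1/n) log ‖c n‖ and (1/n)(log 2 + log ‖c n‖)
    have hupper : Tendsto (fun n : ℕ => (1 / n : ℝ) * Real.log 2 +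
        (1 / n : ℝ) * Real.log ‖c n‖) atTop (nhds 0) := by
      have h2 : Tendsto (fun n : ℕ => (1 / n : ℝ) * Real.log 2) atTop (nhds 0) := by
        simpa using tendsto_one_div_atTop_nhds_zero_nat.mul_const (Real.log 2)
      simpa using h2.add hlog
    have hev : ∀ᶠ n : ℕ in atTop, 1 ≤ ‖c n‖ :=
      hinf.eventually_ge_atTop 1
    refine tendsto_of_tendsto_of_tendsto_of_le_of_le' hlog hupper ?_ ?_
    · filter_upwards [hev] with n hn
      have h1n : (0 : ℝ) ≤ 1 / n := by positivity
      have : Real.log ‖c n‖ ≤ Real.log (1 + ‖c n‖) :=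
        Real.log_le_log (by linarith) (by linarith)
      exact mul_le_mul_of_nonneg_left this h1n
    · filter_upwards [hev] with n hn
      have h1n : (0 : ℝ) ≤ 1 / n := by positivity
      have hle : Real.log (1 + ‖c n‖) ≤ Real.log 2 + Real.log ‖c n‖ := by
        rw [← Real.log_mul (by norm_num) (by linarith)]
        exact Real.log_le_log (by linarith) (by linarith)
      calc (1 / n : ℝ) * Real.log (1 + ‖c n‖)
          ≤ (1 / n : ℝ) * (Real.log 2 + Real.log ‖c n‖) :=
            mul_le_mul_of_nonneg_left hle h1n
        _ = (1 / n : ℝ) * Real.log 2 + (1 / n : ℝ) * Real.log ‖c n‖ := by ring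
  · rintro ⟨R, hR⟩
    obtain ⟨n, hn2, hnR⟩ : ∃ n : ℕ, 2 ≤ n ∧ R < ‖c n‖ := by
      have := (hinf.eventually_gt_atTop R).and (eventually_ge_atTop 2)
      obtain ⟨n, h1, h2⟩ := this.exists
      exact ⟨n, h2, h1⟩
    have := hR n hn2 (in_julia n hn2 (c n))
    rw [Metric.mem_closedBall, dist_zero_right] at this
    linarith
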